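/- arXiv:1601.00198 — 2 statements merged into one kernel-verified Lean document; each statement's English description precedes it below -/
import Mathlib

section
/- Let H = (V,E) be a tree with at least one edge and maximum degree Δ. Then the fractional mixed chromatic number of H with respect to its edge set satisfies η^E(H) ≤ (2Δ − 1)/Δ. -/
open Finset

/-- A mixed stable set of `G` subordinate to the collection `𝒱`: a collection `M` of subsets
of vertices, each contained in a member of `𝒱`, pairwise disjoint, with no edge of `G`
between distinct members. -/
def MixedStableSet {V : Type*} (G : SimpleGraph V) (𝒱 : Set (Finset V))
    (M : Finset (Finset V)) : Prop :=
  (∀ s ∈ M, ∃ t ∈ 𝒱, s ⊆ t) ∧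
  (∀ s ∈ M, ∀ t ∈ M, s ≠ t → Disjoint s t) ∧
  (∀ s ∈ M, ∀ t ∈ M, s ≠ t → ∀ u ∈ s, ∀ v ∈ t, ¬ G.Adj u v)

set_option linter.unusedSectionVars false
namespace TreeFMC

attribute [local instance] Classical.propDecidable

variable {V : Type*} [Fintype V] [DecidableEq V]

noncomputable def pick (s : Finset ℕ) (k : ℕ) : ℕ := (s.sort (· ≤ ·)).getD k 0

lemma pick_mem {s : Finset ℕ} {k : ℕ} (h : k < s.card) : pick s k ∈ s := by
  have hl : (s.sort (· ≤ ·)).length = s.card := s.length_sort _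
  have : (s.sort (· ≤ ·)).getD k 0 ∈ s.sort (· ≤ ·) := by
    rw [List.getD_eq_getElem _ _ (by omega)]
    exact List.getElem_mem _
  rwa [Finset.mem_sort] at this

lemma pick_inj {s : Finset ℕ} {k l : ℕ} (hk : k < s.card) (hl : l < s.card)
    (h : pick s k = pick s l) : k = l := by
  have hnd : (s.sort (· ≤ ·)).Nodup := s.sort_nodup _
  have hlen : (s.sort (· ≤ ·)).length = s.card := s.length_sort _
  unfold pick at h
  rw [List.getD_eq_getElem _ _ (show k < _ by omega), List.getD_eq_getElem _ _ (show l < _ by omega)] at h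
  exact (List.Nodup.getElem_inj_iff hnd).mp h

variable (H : SimpleGraph V) (r : V)

noncomputable def par (v : V) : V :=
  if h : ∃ u, H.Adj v u ∧ H.dist r u + 1 = H.dist r v then h.choose else r

lemma dist_zero_iff (ht : H.IsTree) {v : V} : H.dist r v = 0 ↔ v = r := by
  rw [ht.isConnected.dist_eq_zero_iff]; exact eq_comm

lemma par_spec (ht : H.IsTree) {v : V} (hv : v ≠ r) :
    H.Adj v (par H r v) ∧ H.dist r (par H r v) + 1 = H.dist r v := by
  obtain ⟨w, hw⟩ := ht.isConnected.exists_walk_length_eq_dist r v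
  obtain ⟨u, hadj, q, hq⟩ := SimpleGraph.Walk.exists_eq_cons_of_ne hv w.reverse
  have hqlen : q.length = w.length - 1 := by
    have := congrArg SimpleGraph.Walk.length hq
    simp [SimpleGraph.Walk.length_reverse] at this
    omega
  have hdu : H.dist r u ≤ H.dist r v - 1 := by
    have h1 : H.dist u r ≤ q.length := SimpleGraph.dist_le q
    rw [SimpleGraph.dist_comm] at h1
    omega
  have hdv : H.dist r v ≤ H.dist r u + 1 := by
    have h1 : H.dist r v ≤ H.dist r u + H.dist u v := ht.isConnected.dist_triangle
    have h2 : H.dist u v = 1 := SimpleGraph.dist_eq_one_iff_adj.mpr hadj.symm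
    omega
  have hpos : H.dist r v ≠ 0 := fun h0 => hv ((dist_zero_iff H r ht).mp h0)
  have hex : ∃ x, H.Adj v x ∧ H.dist r x + 1 = H.dist r v := ⟨u, hadj, by omega⟩
  rw [par, dif_pos hex]
  exact hex.choose_spec

/-- A vertex whose distances to the endpoints sum to more than the total
cannot lie on a shortest walk. -/
lemma not_mem_support_of_dist {a b x : V} (q : H.Walk a b) (hq : q.length = H.dist a b)
    (hx : H.dist a b < H.dist a x + H.dist x b) : x ∉ q.support := by
  intro hmem
  have hspec := q.take_spec hmem
  have hlen := congrArg SimpleGraph.Walk.length hspec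
  rw [SimpleGraph.Walk.length_append] at hlen
  have h1 : H.dist a x ≤ (q.takeUntil x hmem).length := SimpleGraph.dist_le _
  have h2 : H.dist x b ≤ (q.dropUntil x hmem).length := SimpleGraph.dist_le _
  omega

lemma parent_unique (ht : H.IsTree) {v u₁ u₂ : V} (h1 : H.Adj v u₁) (h2 : H.Adj v u₂)
    (hd1 : H.dist r u₁ + 1 = H.dist r v) (hd2 : H.dist r u₂ + 1 = H.dist r v) : u₁ = u₂ := by
  obtain ⟨q₁, hq₁p, hq₁l⟩ := ht.isConnected.exists_path_of_dist u₁ r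
  obtain ⟨q₂, hq₂p, hq₂l⟩ := ht.isConnected.exists_path_of_dist u₂ r
  have hw₁ : (SimpleGraph.Walk.cons h1 q₁).length = H.dist v r := by
    rw [SimpleGraph.Walk.length_cons, hq₁l, SimpleGraph.dist_comm (u := u₁),
      SimpleGraph.dist_comm (u := v)]
    omega
  have hw₂ : (SimpleGraph.Walk.cons h2 q₂).length = H.dist v r := by
    rw [SimpleGraph.Walk.length_cons, hq₂l, SimpleGraph.dist_comm (u := u₂),
      SimpleGraph.dist_comm (u := v)]
    omega
  have hp₁ : (SimpleGraph.Walk.cons h1 q₁).IsPath :=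
    SimpleGraph.Walk.isPath_of_length_eq_dist _ hw₁
  have hp₂ : (SimpleGraph.Walk.cons h2 q₂).IsPath :=
    SimpleGraph.Walk.isPath_of_length_eq_dist _ hw₂
  have heq := ht.IsAcyclic.path_unique ⟨_, hp₁⟩ ⟨_, hp₂⟩
  have heqw : SimpleGraph.Walk.cons h1 q₁ = SimpleGraph.Walk.cons h2 q₂ :=
    congrArg Subtype.val heq
  have hsup := congrArg SimpleGraph.Walk.support heqw
  rw [SimpleGraph.Walk.support_cons, SimpleGraph.Walk.support_cons,
    q₁.support_eq_cons, q₂.support_eq_cons] at hsup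
  exact (List.cons.injEq _ _ _ _ ▸ ((List.cons.injEq _ _ _ _).mp hsup).2).1

lemma adj_dist (ht : H.IsTree) {u v : V} (h : H.Adj u v) :
    H.dist r u + 1 = H.dist r v ∨ H.dist r v + 1 = H.dist r u := by
  have h1 : H.dist r v ≤ H.dist r u + 1 := by
    have := ht.isConnected.dist_triangle (u := r) (v := u) (w := v)
    have h2 : H.dist u v = 1 := SimpleGraph.dist_eq_one_iff_adj.mpr h
    omega
  have h2 : H.dist r u ≤ H.dist r v + 1 := by
    have := ht.isConnected.dist_triangle (u := r) (v := v) (w := u)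
    have h3 : H.dist v u = 1 := SimpleGraph.dist_eq_one_iff_adj.mpr h.symm
    omega
  by_contra hcon
  push_neg at hcon
  have hk : H.dist r u = H.dist r v := by omega
  have hkpos : H.dist r u ≠ 0 ∨ H.dist r v ≠ 0 := by
    by_contra h0
    push_neg at h0
    exact h.ne ((dist_zero_iff H r ht).mp h0.1 ▸ (dist_zero_iff H r ht).mp h0.2 ▸ rfl)
  have hupos : H.dist r u ≠ 0 := by omega
  -- build two distinct paths from v to r
  obtain ⟨q, hqp, hql⟩ := ht.isConnected.exists_path_of_dist u r
  have hvq : v ∉ q.support := by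
    refine not_mem_support_of_dist H q hql ?_
    have hd1 : H.dist u v = 1 := SimpleGraph.dist_eq_one_iff_adj.mpr h
    have hd2 : H.dist v r = H.dist r v := SimpleGraph.dist_comm
    have hd3 : H.dist u r = H.dist r u := SimpleGraph.dist_comm
    omega
  have hp2 : (SimpleGraph.Walk.cons h.symm q).IsPath := hqp.cons hvq
  obtain ⟨p, hpp, hpl⟩ := ht.isConnected.exists_path_of_dist v r
  have heq := ht.IsAcyclic.path_unique ⟨_, hp2⟩ ⟨p, hpp⟩
  have heqw : SimpleGraph.Walk.cons h.symm q = p := congrArg Subtype.val heq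
  have hlen := congrArg SimpleGraph.Walk.length heqw
  rw [SimpleGraph.Walk.length_cons, hql, hpl, SimpleGraph.dist_comm (u := u),
    SimpleGraph.dist_comm (u := v)] at hlen
  omega

lemma adj_cases (ht : H.IsTree) {v u : V} (h : H.Adj v u) :
    (v ≠ r ∧ u = par H r v ∧ H.dist r u + 1 = H.dist r v) ∨
    (u ≠ r ∧ v = par H r u ∧ H.dist r v + 1 = H.dist r u) := by
  rcases adj_dist H r ht h.symm with hc | hc
  · left
    have hvr : v ≠ r := by
      intro hv
      rw [hv, (dist_zero_iff H r ht).mpr rfl] at hc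
      omega
    obtain ⟨hadj, hd⟩ := par_spec H r ht hvr
    exact ⟨hvr, parent_unique H r ht h hadj hc (by omega), hc⟩
  · right
    have hur : u ≠ r := by
      intro hu
      rw [hu, (dist_zero_iff H r ht).mpr rfl] at hc
      omega
    obtain ⟨hadj, hd⟩ := par_spec H r ht hur
    exact ⟨hur, parent_unique H r ht h.symm hadj hc (by omega), hc⟩

noncomputable def children (u : V) : Finset V :=
  Finset.univ.filter fun w => w ≠ r ∧ par H r w = u

noncomputable def idx (v : V) : ℕ :=
  ((children H r (par H r v)).filter fun w =>
    (Fintype.equivFin V w : ℕ) < (Fintype.equivFin V v : ℕ)).card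

lemma mem_children_self (v : V) (hv : v ≠ r) : v ∈ children H r (par H r v) := by
  simp [children, hv]

lemma idx_lt_card_children (v : V) (hv : v ≠ r) :
    idx H r v < (children H r (par H r v)).card := by
  apply Finset.card_lt_card
  constructor
  · exact Finset.filter_subset _ _
  · intro hsub
    have := hsub (mem_children_self H r v hv)
    simp at this

lemma idx_inj (ht : H.IsTree) {u w₁ w₂ : V} (h1 : w₁ ∈ children H r u) (h2 : w₂ ∈ children H r u)
    (h : idx H r w₁ = idx H r w₂) : w₁ = w₂ := by
  simp only [children, Finset.mem_filter] at h1 h2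
  have e : V → ℕ := fun w => (Fintype.equivFin V w : ℕ)
  have key : ∀ a b : V, a ≠ r → b ≠ r → par H r a = u → par H r b = u →
      (Fintype.equivFin V a : ℕ) < (Fintype.equivFin V b : ℕ) → idx H r a < idx H r b := by
    intro a b har hbr hpa hpb hab
    unfold idx
    rw [hpa, hpb]
    apply Finset.card_lt_card
    constructor
    · intro x hx
      simp only [Finset.mem_filter] at hx ⊢
      exact ⟨hx.1, by omega⟩
    · intro hsub
      have ha : a ∈ (children H r u).filter fun w =>
          (Fintype.equivFin V w : ℕ) < (Fintype.equivFin V b : ℕ) := by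
        simp only [Finset.mem_filter]
        exact ⟨by simp [children, har, hpa], hab⟩
      have := hsub ha
      simp at this
  rcases lt_trichotomy ((Fintype.equivFin V w₁ : ℕ)) ((Fintype.equivFin V w₂ : ℕ)) with hlt | heq | hgt
  · exact absurd h (Nat.ne_of_lt (key _ _ h1.2.1 h2.2.1 h1.2.2 h2.2.2 hlt))
  · exact (Fintype.equivFin V).injective (Fin.ext heq)
  · exact absurd h.symm (Nat.ne_of_lt (key _ _ h2.2.1 h1.2.1 h2.2.2 h1.2.2 hgt))

variable (Δ : ℕ)

noncomputable def P : ℕ → V → Finset ℕ × Finset ℕ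
  | 0, _ => (Finset.range Δ, Finset.range Δ)
  | n+1, v =>
      (insert (pick (P n (par H r v)).2 (idx H r v))
        (Finset.range (2*Δ-1) \ (P n (par H r v)).1),
       Finset.range (2*Δ-1) \ (P n (par H r v)).1)

noncomputable def col (v : V) : Finset ℕ := (P H r Δ (H.dist r v) v).1
noncomputable def avl (v : V) : Finset ℕ := (P H r Δ (H.dist r v) v).2
noncomputable def cv (v : V) : ℕ := pick (avl H r Δ (par H r v)) (idx H r v)

lemma col_root : col H r Δ r = Finset.range Δ := by
  rw [col, SimpleGraph.dist_self]; rfl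

lemma avl_root : avl H r Δ r = Finset.range Δ := by
  rw [avl, SimpleGraph.dist_self]; rfl

lemma col_eq (ht : H.IsTree) {v : V} (hv : v ≠ r) :
    col H r Δ v = insert (cv H r Δ v) (Finset.range (2*Δ-1) \ col H r Δ (par H r v)) := by
  obtain ⟨-, hd⟩ := par_spec H r ht hv
  rw [col, ← hd]
  rfl

lemma avl_eq (ht : H.IsTree) {v : V} (hv : v ≠ r) :
    avl H r Δ v = Finset.range (2*Δ-1) \ col H r Δ (par H r v) := by
  obtain ⟨-, hd⟩ := par_spec H r ht hv
  rw [avl, ← hd]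
  rfl
lemma children_card (ht : H.IsTree)
    (hdeg : ∀ v, (Finset.univ.filter fun u => H.Adj v u).card ≤ Δ) (u : V) :
    (children H r u).card ≤ (if u = r then Δ else Δ - 1) := by
  have hsub : children H r u ⊆ Finset.univ.filter fun w => H.Adj u w := by
    intro w hw
    simp only [children, Finset.mem_filter] at hw
    have := (par_spec H r ht hw.2.1).1
    rw [hw.2.2] at this
    simp [this.symm]
  by_cases hur : u = r
  · rw [if_pos hur]
    calc (children H r u).card ≤ _ := Finset.card_le_card hsub
    _ ≤ Δ := hdeg u
  · rw [if_neg hur]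
    obtain ⟨hadj, hd⟩ := par_spec H r ht hur
    have hpar_not : par H r u ∉ children H r u := by
      intro hmem
      simp only [children, Finset.mem_filter] at hmem
      obtain ⟨hadj2, hd2⟩ := par_spec H r ht hmem.2.1
      rw [hmem.2.2] at hd2
      omega
    have hsub2 : children H r u ⊆ (Finset.univ.filter fun w => H.Adj u w).erase (par H r u) := by
      intro w hw
      exact Finset.mem_erase.mpr ⟨fun he => hpar_not (he ▸ hw), hsub hw⟩
    calc (children H r u).card ≤ _ := Finset.card_le_card hsub2
    _ = (Finset.univ.filter fun w => H.Adj u w).card - 1 :=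
        Finset.card_erase_of_mem (by simp [hadj])
    _ ≤ Δ - 1 := by have := hdeg u; omega

lemma main (ht : H.IsTree) (hΔ : 1 ≤ Δ)
    (hdeg : ∀ v, (Finset.univ.filter fun u => H.Adj v u).card ≤ Δ) :
    ∀ n (v : V), H.dist r v = n →
      col H r Δ v ⊆ Finset.range (2*Δ-1) ∧ (col H r Δ v).card = Δ ∧
      avl H r Δ v ⊆ col H r Δ v ∧
      (avl H r Δ v).card = (if v = r then Δ else Δ - 1) ∧
      (v ≠ r → idx H r v < (avl H r Δ (par H r v)).card ∧
        cv H r Δ v ∈ avl H r Δ (par H r v)) := by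
  intro n
  induction n using Nat.strong_induction_on with
  | _ n IH =>
    intro v hn
    by_cases hvr : v = r
    · subst hvr
      rw [col_root, avl_root, if_pos rfl]
      refine ⟨Finset.range_subset_range.mpr (by omega), Finset.card_range Δ,
        Finset.Subset.refl _, Finset.card_range Δ, fun h => absurd rfl h⟩
    · -- v ≠ r
      obtain ⟨hadj, hd⟩ := par_spec H r ht hvr
      have hn' : H.dist r v = (H.dist r (par H r v)) + 1 := hd.symm
      have hlt : H.dist r (par H r v) < n := by omega
      obtain ⟨hPsub, hPcard, hPavl, hPavlcard, -⟩ := IH _ hlt (par H r v) rfl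
      -- idx bound
      have hidx : idx H r v < (avl H r Δ (par H r v)).card := by
        have h1 := idx_lt_card_children H r v hvr
        have h2 := children_card H r Δ ht hdeg (par H r v)
        rw [hPavlcard]
        by_cases hpr : par H r v = r
        · rw [if_pos hpr] at h2 ⊢; omega
        · rw [if_neg hpr] at h2 ⊢; omega
      have hcv : cv H r Δ v ∈ avl H r Δ (par H r v) := pick_mem hidx
      have hcvcol : cv H r Δ v ∈ col H r Δ (par H r v) := hPavl hcv
      have hcvrange : cv H r Δ v ∈ Finset.range (2*Δ-1) := hPsub hcvcol
      have hce := col_eq H r Δ ht hvr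
      have hae := avl_eq H r Δ ht hvr
      have hsdcard : (Finset.range (2*Δ-1) \ col H r Δ (par H r v)).card = Δ - 1 := by
        rw [Finset.card_sdiff_of_subset hPsub, Finset.card_range, hPcard]
        omega
      have hcvnot : cv H r Δ v ∉ Finset.range (2*Δ-1) \ col H r Δ (par H r v) := by
        simp [hcvcol]
      refine ⟨?_, ?_, ?_, ?_, fun _ => ⟨hidx, hcv⟩⟩
      · rw [hce]
        exact Finset.insert_subset hcvrange (Finset.sdiff_subset)
      · rw [hce, Finset.card_insert_of_notMem hcvnot, hsdcard]
        omega
      · rw [hce, hae]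
        exact Finset.subset_insert _ _
      · rw [hae, if_neg hvr]
        exact hsdcard

lemma key (ht : H.IsTree) (hΔ : 1 ≤ Δ)
    (hdeg : ∀ v, (Finset.univ.filter fun u => H.Adj v u).card ≤ Δ)
    {v : V} {c : ℕ} {u₁ u₂ : V} (hc : c ∈ col H r Δ v)
    (ha1 : H.Adj v u₁) (ha2 : H.Adj v u₂)
    (hc1 : c ∈ col H r Δ u₁) (hc2 : c ∈ col H r Δ u₂) : u₁ = u₂ := by
  -- helper facts
  have child_case : ∀ u : V, H.Adj v u → u ≠ r → par H r u = v → c ∈ col H r Δ u →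
      c = cv H r Δ u ∧ cv H r Δ u ∈ avl H r Δ v := by
    intro u _ hur hpu hcu
    have hce := col_eq H r Δ ht hur
    rw [hpu] at hce
    rw [hce] at hcu
    rcases Finset.mem_insert.mp hcu with h | h
    · have hm := (main H r Δ ht hΔ hdeg (H.dist r u) u rfl).2.2.2.2 hur
      rw [hpu] at hm
      exact ⟨h, h ▸ hm.2⟩
    · exact absurd (Finset.mem_sdiff.mp h).2 (not_not.mpr hc)
  have parent_case : ∀ u : V, v ≠ r → par H r v = u → c ∈ col H r Δ u → c = cv H r Δ v := by
    intro u hvr hpv hcu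
    have hce := col_eq H r Δ ht hvr
    rw [hpv] at hce
    rw [hce] at hc
    rcases Finset.mem_insert.mp hc with h | h
    · exact h
    · exact absurd (Finset.mem_sdiff.mp h).2 (not_not.mpr hcu)
  rcases adj_cases H r ht ha1 with ⟨hvr, hpu1, -⟩ | ⟨hu1r, hpu1, -⟩ <;>
    rcases adj_cases H r ht ha2 with ⟨hvr2, hpu2, -⟩ | ⟨hu2r, hpu2, -⟩
  · rw [hpu1, hpu2]
  · -- u₁ parent, u₂ child
    exfalso
    have h1 : c = cv H r Δ v := parent_case u₁ hvr hpu1.symm hc1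
    obtain ⟨h2, h2'⟩ := child_case u₂ ha2 hu2r hpu2.symm hc2
    -- cv v ∉ avl v, but c = cv v = cv u₂ ∈ avl v
    have hm := (main H r Δ ht hΔ hdeg (H.dist r v) v rfl).2.2.2.2 hvr
    have hae := avl_eq H r Δ ht hvr
    have : cv H r Δ v ∈ col H r Δ (par H r v) :=
      (main H r Δ ht hΔ hdeg (H.dist r (par H r v)) (par H r v) rfl).2.2.1 hm.2
    rw [hae] at h2'
    exact (Finset.mem_sdiff.mp h2').2 (by rw [← h2, h1]; exact this)
  · -- u₁ child, u₂ parent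
    exfalso
    have h1 : c = cv H r Δ v := parent_case u₂ hvr2 hpu2.symm hc2
    obtain ⟨h2, h2'⟩ := child_case u₁ ha1 hu1r hpu1.symm hc1
    have hm := (main H r Δ ht hΔ hdeg (H.dist r v) v rfl).2.2.2.2 hvr2
    have hae := avl_eq H r Δ ht hvr2
    have : cv H r Δ v ∈ col H r Δ (par H r v) :=
      (main H r Δ ht hΔ hdeg (H.dist r (par H r v)) (par H r v) rfl).2.2.1 hm.2
    rw [hae] at h2'
    exact (Finset.mem_sdiff.mp h2').2 (by rw [← h2, h1]; exact this)
  · -- both children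
    obtain ⟨h1, -⟩ := child_case u₁ ha1 hu1r hpu1.symm hc1
    obtain ⟨h2, -⟩ := child_case u₂ ha2 hu2r hpu2.symm hc2
    have hm1 := (main H r Δ ht hΔ hdeg (H.dist r u₁) u₁ rfl).2.2.2.2 hu1r
    have hm2 := (main H r Δ ht hΔ hdeg (H.dist r u₂) u₂ rfl).2.2.2.2 hu2r
    have e1 : cv H r Δ u₁ = pick (avl H r Δ v) (idx H r u₁) := by rw [cv, ← hpu1]
    have e2 : cv H r Δ u₂ = pick (avl H r Δ v) (idx H r u₂) := by rw [cv, ← hpu2]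
    have hidx : idx H r u₁ = idx H r u₂ := by
      apply pick_inj (s := avl H r Δ v)
      · rw [hpu1]; exact hm1.1
      · rw [hpu2]; exact hm2.1
      · rw [← e1, ← e2, ← h1, ← h2]
    apply idx_inj H r ht (u := v) _ _ hidx
    · simp [children, hu1r, hpu1.symm]
    · simp [children, hu2r, hpu2.symm]
end TreeFMC

/-- **Corollary (fractional mixed chromatic number of trees).** Let `H` be a tree with at
least one edge and maximum degree `Δ`.  Then `η^E(H) ≤ (2Δ - 1)/Δ`: there is a feasible
fractional cover `y` of the vertices by mixed stable sets subordinate to the edge set of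
`H` (edges viewed as 2-element vertex sets) with total weight at most `(2Δ - 1)/Δ`. -/
theorem tree_fracMixedChromatic_le {V : Type*} [Fintype V] [DecidableEq V]
    (H : SimpleGraph V) (htree : H.IsTree) (hedge : ∃ u v, H.Adj u v)
    (Δ : ℕ)
    (hdegle : ∀ v, (H.neighborSet v).ncard ≤ Δ)
    (hdegeq : ∃ v, (H.neighborSet v).ncard = Δ) :
    ∃ y : Finset (Finset V) → ℚ,
      (∀ M, 0 ≤ y M) ∧
      (∀ M, y M ≠ 0 →
        MixedStableSet H {s : Finset V | ∃ u v, H.Adj u v ∧ s = {u, v}} M) ∧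
      (∀ v : V,
        (1 : ℚ) ≤ ∑ M : Finset (Finset V), y M * (if ∃ s ∈ M, v ∈ s then 1 else 0)) ∧
      (∑ M : Finset (Finset V), y M) ≤ (2 * (Δ : ℚ) - 1) / (Δ : ℚ) := by
  classical
  obtain ⟨a, b, hab⟩ := hedge
  have hΔ : 1 ≤ Δ := by
    have h1 := hdegle a
    have h2 : 0 < (H.neighborSet a).ncard := (Set.ncard_pos (Set.toFinite _)).mpr ⟨b, hab⟩
    omega
  have hdeg : ∀ v, (Finset.univ.filter fun u => H.Adj v u).card ≤ Δ := by
    intro v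
    have h1 := hdegle v
    have h2 : (H.neighborSet v).ncard = (Finset.univ.filter fun u => H.Adj v u).card := by
      rw [Set.ncard_eq_toFinset_card']
      congr 1
      ext u
      simp [SimpleGraph.mem_neighborSet]
    omega
  have hnbr : ∀ v : V, ∃ u, H.Adj v u := by
    intro v
    by_cases hva : v = a
    · exact ⟨b, hva ▸ hab⟩
    · obtain ⟨p⟩ := htree.isConnected v a
      obtain ⟨u, h, q, -⟩ := SimpleGraph.Walk.exists_eq_cons_of_ne hva p
      exact ⟨u, h⟩
  set N := 2*Δ - 1 with hN
  set col : V → Finset ℕ := TreeFMC.col H a Δ with hcol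
  have hsubR : ∀ v, col v ⊆ Finset.range N :=
    fun v => (TreeFMC.main H a Δ htree hΔ hdeg (H.dist a v) v rfl).1
  have hcard : ∀ v, (col v).card = Δ :=
    fun v => (TreeFMC.main H a Δ htree hΔ hdeg (H.dist a v) v rfl).2.1
  have hkey : ∀ {v : V} {c : ℕ} {u₁ u₂ : V}, c ∈ col v → H.Adj v u₁ → H.Adj v u₂ →
      c ∈ col u₁ → c ∈ col u₂ → u₁ = u₂ :=
    fun h h1 h2 h3 h4 => TreeFMC.key H a Δ htree hΔ hdeg h h1 h2 h3 h4
  set cmp : ℕ → V → Finset V :=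
    fun c v => Finset.univ.filter fun x => c ∈ col x ∧ (x = v ∨ H.Adj v x) with hcmp
  set Mset : ℕ → Finset (Finset V) :=
    fun c => (Finset.univ.filter fun v => c ∈ col v).image (cmp c) with hMset
  have hcmp_mem : ∀ c v, c ∈ col v → v ∈ cmp c v := by
    intro c v h; simp [hcmp, h]
  have hcmp_col : ∀ c v x, x ∈ cmp c v → c ∈ col x := by
    intro c v x hx
    simp only [hcmp, Finset.mem_filter, Finset.mem_univ, true_and] at hx
    exact hx.1
  have hK : ∀ c v x, c ∈ col v → x ∈ cmp c v → cmp c x = cmp c v := by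
    intro c v x hv hx
    simp only [hcmp, Finset.mem_filter, Finset.mem_univ, true_and] at hx
    obtain ⟨hcx, hxv | hadj⟩ := hx
    · rw [hxv]
    · ext y
      simp only [hcmp, Finset.mem_filter, Finset.mem_univ, true_and]
      constructor
      · rintro ⟨hcy, rfl | hady⟩
        · exact ⟨hcx, Or.inr hadj⟩
        · exact ⟨hcy, Or.inl (hkey hcx hady hadj.symm hcy hv)⟩
      · rintro ⟨hcy, rfl | hady⟩
        · exact ⟨hv, Or.inr hadj.symm⟩
        · exact ⟨hcy, Or.inl (hkey hv hady hadj hcy hcx)⟩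
  have hMSS : ∀ c, MixedStableSet H {s : Finset V | ∃ u v, H.Adj u v ∧ s = {u, v}} (Mset c) := by
    intro c
    refine ⟨?_, ?_, ?_⟩
    · intro s hs
      simp only [hMset, Finset.mem_image, Finset.mem_filter, Finset.mem_univ, true_and] at hs
      obtain ⟨v, hv, rfl⟩ := hs
      by_cases hx : ∃ x, x ∈ cmp c v ∧ H.Adj v x
      · obtain ⟨x, hxm, hxadj⟩ := hx
        refine ⟨{v, x}, ⟨v, x, hxadj, rfl⟩, ?_⟩
        intro y hy
        have hy' := hy
        simp only [hcmp, Finset.mem_filter, Finset.mem_univ, true_and] at hy'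
        rcases hy'.2 with rfl | hady
        · simp
        · have : y = x := hkey hv hady hxadj hy'.1 (hcmp_col _ _ _ hxm)
          simp [this]
      · obtain ⟨u, hu⟩ := hnbr v
        refine ⟨{v, u}, ⟨v, u, hu, rfl⟩, ?_⟩
        intro y hy
        have hy' := hy
        simp only [hcmp, Finset.mem_filter, Finset.mem_univ, true_and] at hy'
        rcases hy'.2 with rfl | hady
        · simp
        · exact absurd ⟨y, hy, hady⟩ hx
    · intro s hs t ht hst
      simp only [hMset, Finset.mem_image, Finset.mem_filter, Finset.mem_univ, true_and] at hs ht
      obtain ⟨v, hv, rfl⟩ := hs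
      obtain ⟨w, hw, rfl⟩ := ht
      rw [Finset.disjoint_left]
      intro x hxs hxt
      exact hst ((hK c v x hv hxs).symm.trans (hK c w x hw hxt))
    · intro s hs t ht hst p hp q hq hadj
      simp only [hMset, Finset.mem_image, Finset.mem_filter, Finset.mem_univ, true_and] at hs ht
      obtain ⟨v, hv, rfl⟩ := hs
      obtain ⟨w, hw, rfl⟩ := ht
      have hq' : q ∈ cmp c v := by
        rw [← hK c v p hv hp]
        simp only [hcmp, Finset.mem_filter, Finset.mem_univ, true_and]
        exact ⟨hcmp_col c w q hq, Or.inr hadj⟩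
      exact hst ((hK c v q hv hq').symm.trans (hK c w q hw hq))
  have hcov : ∀ (v : V) (c : ℕ), (∃ s ∈ Mset c, v ∈ s) ↔ c ∈ col v := by
    intro v c
    constructor
    · rintro ⟨s, hs, hvs⟩
      simp only [hMset, Finset.mem_image, Finset.mem_filter, Finset.mem_univ, true_and] at hs
      obtain ⟨w, hw, rfl⟩ := hs
      exact hcmp_col c w v hvs
    · intro hc
      refine ⟨cmp c v, ?_, hcmp_mem c v hc⟩
      simp only [hMset, Finset.mem_image, Finset.mem_filter, Finset.mem_univ, true_and]
      exact ⟨v, hc, rfl⟩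
  have hswapgen : ∀ F : Finset (Finset V) → ℚ,
      (∑ M : Finset (Finset V),
        (((Finset.range N).filter fun c => Mset c = M).card : ℚ) / (Δ : ℚ) * F M)
        = ∑ c ∈ Finset.range N, F (Mset c) / (Δ : ℚ) := by
    intro F
    rw [← Finset.sum_fiberwise_of_maps_to (g := Mset) (t := Finset.univ)
      (fun x _ => Finset.mem_univ _) (fun c => F (Mset c) / (Δ : ℚ))]
    refine Finset.sum_congr rfl fun M _ => ?_
    rw [Finset.sum_congr rfl (fun c hc => by
      rw [show Mset c = M from (Finset.mem_filter.mp hc).2]),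
      Finset.sum_const, nsmul_eq_mul]
    ring
  refine ⟨fun M => (((Finset.range N).filter fun c => Mset c = M).card : ℚ) / (Δ : ℚ),
    ?_, ?_, ?_, ?_⟩
  · intro M
    exact div_nonneg (Nat.cast_nonneg _) (Nat.cast_nonneg _)
  · intro M hM
    simp only [] at hM
    have hne : ((Finset.range N).filter fun c => Mset c = M).Nonempty := by
      rw [Finset.nonempty_iff_ne_empty]
      intro h
      rw [h] at hM
      simp at hM
    obtain ⟨c, hc⟩ := hne
    rw [← (Finset.mem_filter.mp hc).2]
    exact hMSS c
  · -- coverage and total weight goals share the fiberwise computation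
    intro v
    have hswap := hswapgen (fun M => if ∃ s ∈ M, v ∈ s then (1:ℚ) else 0)
    rw [hswap]
    have h1 : ∀ c ∈ Finset.range N,
        (if ∃ s ∈ Mset c, v ∈ s then (1:ℚ) else 0) / (Δ:ℚ)
          = (if c ∈ col v then (1:ℚ) else 0) / (Δ:ℚ) := by
      intro c _
      simp only [hcov v c]
    rw [Finset.sum_congr rfl h1, ← Finset.sum_div, Finset.sum_boole]
    have h2 : (Finset.range N).filter (fun c => c ∈ col v) = col v := by
      ext c
      exact ⟨fun h => (Finset.mem_filter.mp h).2,
        fun h => Finset.mem_filter.mpr ⟨hsubR v h, h⟩⟩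
    rw [h2, hcard v, div_self (Nat.cast_ne_zero.mpr (by omega : Δ ≠ 0))]
  · have h0 : ∀ M : Finset (Finset V),
        (((Finset.range N).filter fun c => Mset c = M).card : ℚ) / (Δ : ℚ)
          = (((Finset.range N).filter fun c => Mset c = M).card : ℚ) / (Δ : ℚ) * (1:ℚ) := by
      intro M; ring
    have hswap := hswapgen (fun _ => (1:ℚ))
    rw [Finset.sum_congr rfl (fun M _ => h0 M), hswap, Finset.sum_const, Finset.card_range,
      nsmul_eq_mul]
    have h1 : ((N:ℕ):ℚ) = 2*(Δ:ℚ) - 1 := by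
      rw [hN]
      have h2 : (1:ℕ) ≤ 2*Δ := by omega
      rw [Nat.cast_sub h2]
      push_cast
      ring
    rw [h1]
    apply le_of_eq
    ring
end

section
/- Consider a packing integer program (P), a partition J = {J_1,…,J_q} of the column index set [n], and the packing interaction graph G^{pack}_{A,J} = (V,E). Let M be a collection of pairwise disjoint subsets of V such that no edge of G^{pack}_{A,J} has endpoints in two distinct sets of M. For each M ∈ M, let x^{(M)} be any point of P all of whose coordinates outside ∪_{v_j∈M} J_j are zero. Then the point Σ_{M∈M} x^{(M)} belongs to P (and hence to P^I); consequently z^I ≥ Σ_{M∈M} c^T x^{(M)}. -/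
open Finset

/-- The dot product `cᵀx` of two vectors in `ℚⁿ`. -/
def dotp {n : ℕ} (c x : Fin n → ℚ) : ℚ := ∑ j, c j * x j

/-- The feasible region `P` of the MILP `Ax ≤ b`, `x ≥ 0`, `x_j ∈ ℤ` for `j ∈ L`. -/
def mipSet {m n : ℕ} (A : Matrix (Fin m) (Fin n) ℚ) (b : Fin m → ℚ)
    (L : Finset (Fin n)) : Set (Fin n → ℚ) :=
  {x | (∀ i, ∑ j, A i j * x j ≤ b i) ∧ (∀ j, 0 ≤ x j) ∧ ∀ j ∈ L, ∃ z : ℤ, x j = (z : ℚ)}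

/-- The LP relaxation `P^LP`. -/
def lpSet {m n : ℕ} (A : Matrix (Fin m) (Fin n) ℚ) (b : Fin m → ℚ) : Set (Fin n → ℚ) :=
  {x | (∀ i, ∑ j, A i j * x j ≤ b i) ∧ (∀ j, 0 ≤ x j)}

/-- The integer hull `P^I = conv(P)`. -/
def intHull {m n : ℕ} (A : Matrix (Fin m) (Fin n) ℚ) (b : Fin m → ℚ)
    (L : Finset (Fin n)) : Set (Fin n → ℚ) :=
  convexHull ℚ (mipSet A b L)

/-- The sparse closure `P^(N)`: the LP relaxation intersected with all halfspaces
`αᵀx ≤ β` that are valid for `P^I` and whose support is contained in `N`. -/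
def sparseClosure {m n : ℕ} (A : Matrix (Fin m) (Fin n) ℚ) (b : Fin m → ℚ)
    (L : Finset (Fin n)) (N : Set (Fin n)) : Set (Fin n → ℚ) :=
  lpSet A b ∩
    ⋂ (α : Fin n → ℚ) (β : ℚ)
      (_ : (∀ x ∈ intHull A b L, dotp α x ≤ β) ∧ ∀ j, α j ≠ 0 → j ∈ N),
      {x | dotp α x ≤ β}

/-- The packing interaction graph of `A` w.r.t. the partition of columns given by
`π : Fin n → Fin q` (part `J_u = π⁻¹(u)`): nodes `u ≠ v` are adjacent iff some row of `A`
has nonzero entries in a column of `J_u` and in a column of `J_v`. -/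
def packGraph {m n q : ℕ} (A : Matrix (Fin m) (Fin n) ℚ) (π : Fin n → Fin q) :
    SimpleGraph (Fin q) where
  Adj u v := u ≠ v ∧ ∃ i a₁ a₂, π a₁ = u ∧ π a₂ = v ∧ A i a₁ ≠ 0 ∧ A i a₂ ≠ 0
  symm := by
    constructor
    rintro u v ⟨huv, i, a₁, a₂, h1, h2, h3, h4⟩
    exact ⟨huv.symm, i, a₂, a₁, h2, h1, h4, h3⟩
  loopless := by
    constructor
    rintro u ⟨h, -⟩
    exact h rfl

/-- The sparse closure `P^(S)` for a set `S` of nodes of the packing interaction graph. -/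
def blockClosure {m n q : ℕ} (A : Matrix (Fin m) (Fin n) ℚ) (b : Fin m → ℚ)
    (L : Finset (Fin n)) (π : Fin n → Fin q) (S : Finset (Fin q)) : Set (Fin n → ℚ) :=
  sparseClosure A b L {j | π j ∈ S}

/-- The column block-sparse closure `P^{𝒱,P} = ⋂_{S ∈ 𝒱} P^(S)` for a support list `𝒱`. -/
def listClosure {m n q : ℕ} (A : Matrix (Fin m) (Fin n) ℚ) (b : Fin m → ℚ)
    (L : Finset (Fin n)) (π : Fin n → Fin q) (𝒱 : Finset (Finset (Fin q))) :
    Set (Fin n → ℚ) :=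
  ⋂ S ∈ 𝒱, blockClosure A b L π S

/-- The super sparse closure `P^{S.S.}`: support list of all singletons. -/
def superSparseClosure {m n q : ℕ} (A : Matrix (Fin m) (Fin n) ℚ) (b : Fin m → ℚ)
    (L : Finset (Fin n)) (π : Fin n → Fin q) : Set (Fin n → ℚ) :=
  ⋂ u : Fin q, blockClosure A b L π {u}

/-- The natural sparse closure `P^{N.S.}`: for each row `i` of `A`, add all cuts supported
on the variables of the blocks touched by row `i`. -/
def naturalSparseClosure {m n q : ℕ} (A : Matrix (Fin m) (Fin n) ℚ) (b : Fin m → ℚ)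
    (L : Finset (Fin n)) (π : Fin n → Fin q) : Set (Fin n → ℚ) :=
  ⋂ i : Fin m, sparseClosure A b L {j | ∃ j', π j' = π j ∧ A i j' ≠ 0}

/-- **Lemma (combining solutions along a mixed stable set).** For a packing integer program
and a column partition given by `π`, let `ℳ` be a collection of pairwise disjoint subsets
of the nodes of the packing interaction graph with no edge between distinct members, and
for each `M ∈ ℳ` let `x M` be a feasible point of `P` supported on the variables of the
blocks of `M`.  Then `Σ_{M ∈ ℳ} x M` is again feasible (hence in `P^I`), and consequently
`z^I ≥ Σ_{M ∈ ℳ} cᵀ (x M)`. -/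
theorem packing_sum_over_mixedStableSet_feasible
    {m n q : ℕ}
    (A : Matrix (Fin m) (Fin n) ℚ) (b : Fin m → ℚ) (c : Fin n → ℚ) (L : Finset (Fin n))
    (hA : ∀ i j, 0 ≤ A i j) (hb : ∀ i, 0 ≤ b i) (hc : ∀ j, 0 ≤ c j)
    (π : Fin n → Fin q) (hπ : Function.Surjective π)
    (ℳ : Finset (Finset (Fin q)))
    (hdisj : ∀ s ∈ ℳ, ∀ t ∈ ℳ, s ≠ t → Disjoint s t)
    (hnoedge : ∀ s ∈ ℳ, ∀ t ∈ ℳ, s ≠ t → ∀ u ∈ s, ∀ v ∈ t, ¬ (packGraph A π).Adj u v)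
    (x : Finset (Fin q) → (Fin n → ℚ))
    (hxP : ∀ M ∈ ℳ, x M ∈ mipSet A b L)
    (hxsupp : ∀ M ∈ ℳ, ∀ j : Fin n, π j ∉ M → x M j = 0)
    (xI : Fin n → ℚ) (hxI : xI ∈ intHull A b L)
    (hxImax : ∀ z ∈ intHull A b L, dotp c z ≤ dotp c xI) :
    (fun j => ∑ M ∈ ℳ, x M j) ∈ mipSet A b L ∧
    ∑ M ∈ ℳ, dotp c (x M) ≤ dotp c xI := by
  have hx0 : ∀ M ∈ ℳ, ∀ j, 0 ≤ x M j := fun M hM => (hxP M hM).2.1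
  -- support: if row i has nonzero contribution from x M, there is a witness column
  have hsupp : ∀ (i : Fin m), ∀ M ∈ ℳ, (∑ j, A i j * x M j) ≠ 0 →
      ∃ j : Fin n, A i j ≠ 0 ∧ x M j ≠ 0 ∧ π j ∈ M := by
    intro i M hM hne
    obtain ⟨j, -, hj⟩ := Finset.exists_ne_zero_of_sum_ne_zero hne
    have hAij : A i j ≠ 0 := fun h => hj (by simp [h])
    have hxj : x M j ≠ 0 := fun h => hj (by simp [h])
    refine ⟨j, hAij, hxj, ?_⟩
    by_contra hnot
    exact hxj (hxsupp M hM j hnot)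
  -- at most one M contributes to each row
  have key : ∀ (i : Fin m), ∀ M ∈ ℳ, ∀ M' ∈ ℳ, M ≠ M' →
      (∑ j, A i j * x M j) ≠ 0 → (∑ j, A i j * x M' j) = 0 := by
    intro i M hM M' hM' hne h1
    by_contra h2
    obtain ⟨j, hAj, hxj, hπj⟩ := hsupp i M hM h1
    obtain ⟨j', hAj', hxj', hπj'⟩ := hsupp i M' hM' h2
    have hππ : π j ≠ π j' := by
      intro h
      exact (Finset.disjoint_left.mp (hdisj M hM M' hM' hne)) hπj (h ▸ hπj')
    exact hnoedge M hM M' hM' hne (π j) hπj (π j') hπj'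
      ⟨hππ, i, j, j', rfl, rfl, hAj, hAj'⟩
  have hrow : ∀ i : Fin m, ∑ j, A i j * ∑ M ∈ ℳ, x M j ≤ b i := by
    intro i
    have hswap : ∑ j, A i j * ∑ M ∈ ℳ, x M j = ∑ M ∈ ℳ, ∑ j, A i j * x M j := by
      simp_rw [Finset.mul_sum]
      exact Finset.sum_comm
    rw [hswap]
    by_cases h : ∃ M ∈ ℳ, (∑ j, A i j * x M j) ≠ 0
    · obtain ⟨M₀, hM₀, hM₀ne⟩ := h
      have := Finset.sum_eq_single_of_mem M₀ hM₀
        (fun M' hM' hne' => key i M₀ hM₀ M' hM' (Ne.symm hne') hM₀ne)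
      rw [this]
      exact (hxP M₀ hM₀).1 i
    · push_neg at h
      rw [Finset.sum_eq_zero h]
      exact hb i
  have hmem : (fun j => ∑ M ∈ ℳ, x M j) ∈ mipSet A b L := by
    refine ⟨hrow, fun j => Finset.sum_nonneg fun M hM => hx0 M hM j, ?_⟩
    intro j hj
    have h := fun (M : ℳ) => (hxP M M.2).2.2 j hj
    choose z hz using h
    refine ⟨∑ M ∈ ℳ.attach, z M, ?_⟩
    show ∑ M ∈ ℳ, x M j = _
    rw [← Finset.sum_attach ℳ (fun M => x M j)]
    push_cast
    exact Finset.sum_congr rfl fun M _ => hz M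
  refine ⟨hmem, ?_⟩
  have hsum : ∑ M ∈ ℳ, dotp c (x M) = dotp c (fun j => ∑ M ∈ ℳ, x M j) := by
    unfold dotp
    simp_rw [Finset.mul_sum]
    exact Finset.sum_comm
  rw [hsum]
  exact hxImax _ (subset_convexHull ℚ _ hmem)
end
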